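/- Let R̂ be an N×N Hermitian matrix and γ > 0. For any w ∈ ℂ^N, the supremum of w^H R w over all Hermitian matrices R with spectral norm ‖R - R̂‖₂ ≤ √γ equals w^H R̂ w + √γ ‖w‖². -/

import Mathlib

open Matrix Complex
open scoped ComplexOrder
open scoped Matrix.Norms.L2Operator

/-- The largest real eigenvalue of a complex matrix (as `sSup` of its set of real
eigenvalues); for a Hermitian matrix this is the largest eigenvalue. -/
noncomputable def lambdaMax {N : ℕ} (A : Matrix (Fin N) (Fin N) ℂ) : ℝ :=
  sSup {t : ℝ | ∃ v : Fin N → ℂ, v ≠ 0 ∧ A.mulVec v = (t : ℂ) • v}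

open Classical in
/-- The inverse of the positive definite square root of a positive definite matrix
(junk value `0` if the matrix is not positive definite). -/
noncomputable def isqrt {N : ℕ} (R : Matrix (Fin N) (Fin N) ℂ) : Matrix (Fin N) (Fin N) ℂ :=
  if h : R.PosDef then ((h.posSemidef.1.eigenvectorUnitary : Matrix (Fin N) (Fin N) ℂ) *
    diagonal ((↑) ∘ Real.sqrt ∘ h.posSemidef.1.eigenvalues) *
    (star (h.posSemidef.1.eigenvectorUnitary : Matrix (Fin N) (Fin N) ℂ)))⁻¹ else 0

/-- Euclidean norm of a complex vector. -/
noncomputable def vecNorm {N : ℕ} (v : Fin N → ℂ) : ℝ :=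
  Real.sqrt (∑ i, Complex.normSq (v i))

/-- Frobenius norm of a complex matrix. -/
noncomputable def frobNorm {N M : ℕ} (X : Matrix (Fin N) (Fin M) ℂ) : ℝ :=
  Real.sqrt (∑ i, ∑ j, Complex.normSq (X i j))

/-- The spectral (ℓ²-operator) norm of a complex square matrix. -/
noncomputable def specNorm {N : ℕ} (X : Matrix (Fin N) (Fin N) ℂ) : ℝ :=
  sSup {r : ℝ | ∃ v : Fin N → ℂ, vecNorm v ≤ 1 ∧ r = vecNorm (X.mulVec v)}

lemma vecNorm_eq {N : ℕ} (v : Fin N → ℂ) :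
    vecNorm v = ‖(EuclideanSpace.equiv (Fin N) ℂ).symm v‖ := by
  rw [EuclideanSpace.norm_eq, vecNorm]
  congr 1
  refine Finset.sum_congr rfl fun i _ => ?_
  simp [Complex.normSq_eq_norm_sq]

lemma vecNorm_nonneg {N : ℕ} (v : Fin N → ℂ) : 0 ≤ vecNorm v := Real.sqrt_nonneg _

lemma vecNorm_smul {N : ℕ} (c : ℂ) (v : Fin N → ℂ) :
    vecNorm (c • v) = ‖c‖ * vecNorm v := by
  have : (EuclideanSpace.equiv (Fin N) ℂ).symm (c • v)
      = c • (EuclideanSpace.equiv (Fin N) ℂ).symm v := rfl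
  rw [vecNorm_eq, vecNorm_eq, this, norm_smul]

lemma specNorm_bddAbove {N : ℕ} (X : Matrix (Fin N) (Fin N) ℂ) :
    BddAbove {r : ℝ | ∃ v : Fin N → ℂ, vecNorm v ≤ 1 ∧ r = vecNorm (X.mulVec v)} := by
  refine ⟨‖X‖, fun r hr => ?_⟩
  obtain ⟨v, hv, rfl⟩ := hr
  calc vecNorm (X.mulVec v) = ‖(EuclideanSpace.equiv (Fin N) ℂ).symm (X *ᵥ v)‖ := vecNorm_eq _
    _ ≤ ‖X‖ * ‖((EuclideanSpace.equiv (Fin N) ℂ).symm v : EuclideanSpace ℂ (Fin N))‖ :=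
        X.l2_opNorm_mulVec _
    _ ≤ ‖X‖ * 1 := by
        refine mul_le_mul_of_nonneg_left ?_ (norm_nonneg _)
        rw [← vecNorm_eq]; exact hv
    _ = ‖X‖ := mul_one _

lemma vecNorm_mulVec_le {N : ℕ} (X : Matrix (Fin N) (Fin N) ℂ) (v : Fin N → ℂ) :
    vecNorm (X.mulVec v) ≤ specNorm X * vecNorm v := by
  rcases eq_or_ne (vecNorm v) 0 with h0 | h0
  · have hv0 : v = 0 := by
      have := vecNorm_eq v
      rw [h0] at this
      have : (EuclideanSpace.equiv (Fin N) ℂ).symm v = 0 := by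
        rwa [eq_comm, norm_eq_zero] at this
      simpa using congrArg (EuclideanSpace.equiv (Fin N) ℂ) this
    simp [hv0, h0, Matrix.mulVec_zero, vecNorm]
  · have hpos : 0 < vecNorm v := lt_of_le_of_ne (vecNorm_nonneg v) (Ne.symm h0)
    set c : ℝ := vecNorm v
    have hmem : vecNorm (X.mulVec ((c⁻¹ : ℂ) • v)) ∈
        {r : ℝ | ∃ u : Fin N → ℂ, vecNorm u ≤ 1 ∧ r = vecNorm (X.mulVec u)} := by
      refine ⟨(c⁻¹ : ℂ) • v, le_of_eq ?_, rfl⟩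
      rw [vecNorm_smul]
      simp [abs_of_pos hpos, inv_mul_cancel₀ h0, c]
    have hle := le_csSup (specNorm_bddAbove X) hmem
    rw [Matrix.mulVec_smul, vecNorm_smul] at hle
    have hn : ‖((c : ℂ))⁻¹‖ = c⁻¹ := by
      rw [norm_inv, Complex.norm_real, Real.norm_eq_abs, abs_of_pos hpos]
    rw [hn] at hle
    calc vecNorm (X.mulVec v) = c * (c⁻¹ * vecNorm (X.mulVec v)) := by field_simp
      _ ≤ c * specNorm X := mul_le_mul_of_nonneg_left hle hpos.le
      _ = specNorm X * c := mul_comm _ _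

lemma dot_eq_inner {N : ℕ} (w u : Fin N → ℂ) :
    star w ⬝ᵥ u = @inner ℂ (EuclideanSpace ℂ (Fin N)) _
      ((EuclideanSpace.equiv (Fin N) ℂ).symm w) ((EuclideanSpace.equiv (Fin N) ℂ).symm u) := by
  rw [PiLp.inner_apply]
  simp [dotProduct, RCLike.inner_apply, mul_comm]

lemma norm_dot_le {N : ℕ} (w u : Fin N → ℂ) :
    ‖star w ⬝ᵥ u‖ ≤ vecNorm w * vecNorm u := by
  rw [dot_eq_inner, vecNorm_eq, vecNorm_eq]
  exact norm_inner_le_norm _ _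

lemma re_quad_le {N : ℕ} (A : Matrix (Fin N) (Fin N) ℂ) (w : Fin N → ℂ) :
    (star w ⬝ᵥ A.mulVec w).re ≤ specNorm A * vecNorm w ^ 2 := by
  calc (star w ⬝ᵥ A.mulVec w).re ≤ ‖star w ⬝ᵥ A.mulVec w‖ := Complex.re_le_norm _
    _ ≤ vecNorm w * vecNorm (A.mulVec w) := norm_dot_le _ _
    _ ≤ vecNorm w * (specNorm A * vecNorm w) :=
        mul_le_mul_of_nonneg_left (vecNorm_mulVec_le A w) (vecNorm_nonneg w)
    _ = specNorm A * vecNorm w ^ 2 := by ring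

lemma dot_self_re {N : ℕ} (w : Fin N → ℂ) : (star w ⬝ᵥ w).re = vecNorm w ^ 2 := by
  have h : vecNorm w ^ 2 = ∑ i, Complex.normSq (w i) :=
    Real.sq_sqrt (Finset.sum_nonneg fun i _ => Complex.normSq_nonneg _)
  rw [h, dotProduct, Complex.re_sum]
  refine Finset.sum_congr rfl fun i _ => ?_
  simp [Complex.normSq_apply, Complex.mul_re]

lemma specNorm_smul_one_le {N : ℕ} (c : ℂ) :
    specNorm (c • (1 : Matrix (Fin N) (Fin N) ℂ)) ≤ ‖c‖ := by
  refine Real.sSup_le (fun r hr => ?_) (norm_nonneg c)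
  obtain ⟨v, hv, rfl⟩ := hr
  rw [Matrix.smul_mulVec, Matrix.one_mulVec, vecNorm_smul]
  calc ‖c‖ * vecNorm v ≤ ‖c‖ * 1 := mul_le_mul_of_nonneg_left hv (norm_nonneg c)
    _ = ‖c‖ := mul_one _

/-- the supremum of `wᴴ R w` over Hermitian `R` with spectral norm
`‖R - R̂‖₂ ≤ √γ` equals `wᴴ R̂ w + √γ ‖w‖²`. -/
theorem sup_quad_over_spectral_ball {N : ℕ}
    (Rhat : Matrix (Fin N) (Fin N) ℂ) (hRhat : Rhat.IsHermitian)
    (γ : ℝ) (hγ : 0 < γ) (w : Fin N → ℂ) :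
    IsLUB
      {r : ℝ | ∃ R : Matrix (Fin N) (Fin N) ℂ, R.IsHermitian ∧
        specNorm (R - Rhat) ≤ Real.sqrt γ ∧ r = (star w ⬝ᵥ R.mulVec w).re}
      ((star w ⬝ᵥ Rhat.mulVec w).re + Real.sqrt γ * vecNorm w ^ 2) := by
  set s := Real.sqrt γ with hs
  have hs0 : 0 ≤ s := Real.sqrt_nonneg γ
  constructor
  · -- upper bound
    rintro r ⟨R, hR, hball, rfl⟩
    have key : (star w ⬝ᵥ (R - Rhat).mulVec w).re ≤ s * vecNorm w ^ 2 := by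
      calc (star w ⬝ᵥ (R - Rhat).mulVec w).re ≤ specNorm (R - Rhat) * vecNorm w ^ 2 :=
            re_quad_le _ _
        _ ≤ s * vecNorm w ^ 2 :=
            mul_le_mul_of_nonneg_right hball (sq_nonneg _)
    have hsplit : (star w ⬝ᵥ R.mulVec w).re
        = (star w ⬝ᵥ Rhat.mulVec w).re + (star w ⬝ᵥ (R - Rhat).mulVec w).re := by
      rw [Matrix.sub_mulVec, dotProduct_sub, Complex.sub_re]
      ring
    linarith
  · -- least upper bound: the witness R₀ attains the value
    intro b hb
    have hmem : (star w ⬝ᵥ Rhat.mulVec w).re + s * vecNorm w ^ 2 ∈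
        {r : ℝ | ∃ R : Matrix (Fin N) (Fin N) ℂ, R.IsHermitian ∧
          specNorm (R - Rhat) ≤ s ∧ r = (star w ⬝ᵥ R.mulVec w).re} := by
      refine ⟨Rhat + (s : ℂ) • 1, ?_, ?_, ?_⟩
      · refine hRhat.add ?_
        unfold Matrix.IsHermitian
        rw [Matrix.conjTranspose_smul, Matrix.conjTranspose_one]
        simp [Complex.star_def, Complex.conj_ofReal]
      · rw [add_sub_cancel_left]
        calc specNorm ((s : ℂ) • (1 : Matrix (Fin N) (Fin N) ℂ)) ≤ ‖(s : ℂ)‖ :=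
              specNorm_smul_one_le _
          _ = s := by rw [Complex.norm_real, Real.norm_eq_abs, _root_.abs_of_nonneg hs0]
      · rw [Matrix.add_mulVec, dotProduct_add, Matrix.smul_mulVec,
          Matrix.one_mulVec, dotProduct_smul, Complex.add_re, smul_eq_mul,
          Complex.re_ofReal_mul, dot_self_re]
    exact hb hmem
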